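/- Let G be a connected graph and T an even-sized subset of its vertex set. Then there exists a T-join H of G whose edge-complement G − E(H) is a forest. -/

import Mathlib

open SimpleGraph Finset
open scoped symmDiff
set_option linter.unusedSectionVars false
set_option linter.unnecessarySeqFocus false
set_option linter.unreachableTactic false
set_option linter.unusedTactic false


variable {V : Type*} [Fintype V] [DecidableEq V]

/-- Number of edges incident to `v` receiving color `i` under the edge-coloring `f`. -/
def colorCount (G : SimpleGraph V) [DecidableRel G.Adj] {k : ℕ}
    (f : Sym2 V → Fin k) (v : V) (i : Fin k) : ℕ :=
  ((G.incidenceFinset v).filter (fun e => f e = i)).card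

/-- The edge-coloring `f` is odd at the vertex `v`: every color appearing at `v`
appears an odd number of times at `v`. -/
def OddAt (G : SimpleGraph V) [DecidableRel G.Adj] {k : ℕ}
    (f : Sym2 V → Fin k) (v : V) : Prop :=
  ∀ i : Fin k, colorCount G f v i = 0 ∨ Odd (colorCount G f v i)

/-- An odd edge-coloring: odd at every vertex. -/
def IsOddColoring (G : SimpleGraph V) [DecidableRel G.Adj] {k : ℕ}
    (f : Sym2 V → Fin k) : Prop :=
  ∀ v : V, OddAt G f v

/-- The odd chromatic index: least `k` admitting an odd `k`-edge-coloring. -/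
noncomputable def oddChromIndex (G : SimpleGraph V) [DecidableRel G.Adj] : ℕ :=
  sInf {k | ∃ f : Sym2 V → Fin k, IsOddColoring G f}

noncomputable def deg2 (H : SimpleGraph V) (v : V) : ZMod 2 :=
  ((H.neighborSet v).ncard : ZMod 2)

lemma finset_card_symmDiff_zmod (A B : Finset V) :
    (((A ∆ B).card : ℕ) : ZMod 2) = (A.card : ZMod 2) + B.card := by
  have h1 : (A ∆ B).card + (A ∩ B).card = (A ∪ B).card := by
    rw [symmDiff_eq_sup_sdiff_inf]
    exact Finset.card_sdiff_add_card_eq_card Finset.inter_subset_union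
  have h2 := Finset.card_union_add_card_inter A B
  have h3 : (A ∆ B).card + 2 * (A ∩ B).card = A.card + B.card := by omega
  have := congrArg (fun n : ℕ => (n : ZMod 2)) h3
  push_cast at this
  have h2z : (2 : ZMod 2) = 0 := by decide
  rw [h2z] at this
  simpa using this

lemma set_ncard_symmDiff_zmod (s t : Set V) :
    (((s ∆ t).ncard : ℕ) : ZMod 2) = (s.ncard : ZMod 2) + t.ncard := by
  classical
  rw [Set.ncard_eq_toFinset_card' s, Set.ncard_eq_toFinset_card' t,
    Set.ncard_eq_toFinset_card' (s ∆ t)]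
  rw [show (s ∆ t).toFinset = s.toFinset ∆ t.toFinset by
    simp [Set.ext_iff, Set.mem_symmDiff, Finset.mem_symmDiff, Finset.ext_iff]]
  exact finset_card_symmDiff_zmod _ _

lemma neighborSet_symmDiff (A B : SimpleGraph V) (v : V) :
    (A ∆ B).neighborSet v = (A.neighborSet v) ∆ (B.neighborSet v) := by
  ext w
  simp only [symmDiff_def, Set.mem_union, mem_neighborSet, sup_adj, sdiff_adj,
    Set.mem_diff]
  rfl

lemma deg2_symmDiff (A B : SimpleGraph V) (v : V) :
    deg2 (A ∆ B) v = deg2 A v + deg2 B v := by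
  rw [deg2, neighborSet_symmDiff]
  exact set_ncard_symmDiff_zmod _ _

lemma deg2_bot (v : V) : deg2 (⊥ : SimpleGraph V) v = 0 := by
  have : (⊥ : SimpleGraph V).neighborSet v = ∅ := by
    simp only [SimpleGraph.neighborSet, bot_adj, Set.setOf_false]
  simp [deg2, this]

lemma deg2_sup_of_disjoint {A B : SimpleGraph V} (h : Disjoint A B) (v : V) :
    deg2 (A ⊔ B) v = deg2 A v + deg2 B v := by
  rw [← h.symmDiff_eq_sup]
  exact deg2_symmDiff A B v

lemma deg2_congr {A B : SimpleGraph V} (h : ∀ x y, A.Adj x y ↔ B.Adj x y) :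
    deg2 A = deg2 B := by
  have : A = B := SimpleGraph.ext (by ext x y; exact h x y)
  rw [this]

lemma deg2_single {a b : V} (hab : a ≠ b) (v : V) :
    deg2 (fromEdgeSet {s(a, b)}) v
      = (if v = a then 1 else 0) + (if v = b then 1 else 0) := by
  have hns : (fromEdgeSet {s(a, b)} : SimpleGraph V).neighborSet v
      = if v = a then {b} else if v = b then {a} else ∅ := by
    ext w
    simp only [mem_neighborSet, fromEdgeSet_adj, Set.mem_singleton_iff, Sym2.eq,
      Sym2.rel_iff', Prod.mk.injEq, Prod.swap_prod_mk]
    split_ifs with h1 h2 <;> subst_vars <;> constructor <;> intro h <;>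
      · first
        | (rcases h with ⟨(⟨rfl, rfl⟩ | ⟨rfl, rfl⟩), hne⟩ <;> simp_all)
        | (simp_all; try tauto)
  rw [deg2, hns]
  split_ifs with h1 h2 <;> subst_vars <;> simp_all [Set.ncard_singleton]

lemma deg2_walk {u v : V} (G : SimpleGraph V) (p : G.Walk u v) (hp : p.IsPath) (w : V) :
    deg2 p.toSubgraph.spanningCoe w
      = (if w = u then 1 else 0) + (if w = v then 1 else 0) := by
  induction p with
  | nil =>
    rename_i z
    have hb : (SimpleGraph.Walk.nil : G.Walk z z).toSubgraph.spanningCoe = ⊥ := by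
      ext x y
      simp [SimpleGraph.Walk.toSubgraph, SimpleGraph.singletonSubgraph]
    rw [hb, deg2_bot]
    by_cases h : w = z <;> simp [h] <;> decide
  | @cons a c d hadj q ih =>
    rw [SimpleGraph.Walk.cons_isPath_iff] at hp
    obtain ⟨hq, hans⟩ := hp
    have hsup : (SimpleGraph.Walk.cons hadj q).toSubgraph.spanningCoe
        = (G.subgraphOfAdj hadj).spanningCoe ⊔ q.toSubgraph.spanningCoe := by
      ext x y
      simp [SimpleGraph.Walk.toSubgraph, SimpleGraph.Subgraph.sup_adj]
    have hdisj : Disjoint (G.subgraphOfAdj hadj).spanningCoe q.toSubgraph.spanningCoe := by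
      rw [disjoint_iff]
      ext x y
      simp only [inf_adj, bot_adj, iff_false, not_and, SimpleGraph.Subgraph.spanningCoe_adj,
        SimpleGraph.subgraphOfAdj_adj]
      intro h1 h2
      have hx : x ∈ q.support := by
        rw [← SimpleGraph.Walk.mem_verts_toSubgraph]
        exact h2.fst_mem
      have hy : y ∈ q.support := by
        rw [← SimpleGraph.Walk.mem_verts_toSubgraph]
        exact h2.snd_mem
      rw [Sym2.eq_iff] at h1
      rcases h1 with ⟨rfl, rfl⟩ | ⟨rfl, rfl⟩ <;> [exact hans hx; exact hans hy]
    have hsingle : deg2 (G.subgraphOfAdj hadj).spanningCoe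
        = deg2 (fromEdgeSet {s(a, c)} : SimpleGraph V) := by
      apply deg2_congr
      intro x y
      simp only [SimpleGraph.Subgraph.spanningCoe_adj, SimpleGraph.subgraphOfAdj_adj,
        fromEdgeSet_adj, Set.mem_singleton_iff]
      constructor
      · intro h1
        refine ⟨h1.symm, ?_⟩
        rw [Sym2.eq_iff] at h1
        rcases h1 with ⟨rfl, rfl⟩ | ⟨rfl, rfl⟩ <;> [exact hadj.ne; exact hadj.ne']
      · exact fun h1 => h1.1.symm
    rw [hsup, deg2_sup_of_disjoint hdisj, hsingle, deg2_single hadj.ne, ih hq]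
    have hC : (if w = c then (1 : ZMod 2) else 0) + (if w = c then 1 else 0) = 0 := by
      split_ifs <;> decide
    linear_combination hC

lemma exists_join (G : SimpleGraph V) (hG : G.Connected) :
    ∀ n (T : Finset V), T.card ≤ n → Even T.card →
      ∃ H, H ≤ G ∧ ∀ v, deg2 H v = if v ∈ T then 1 else 0 := by
  intro n
  induction n with
  | zero =>
    intro T hc _
    have hT : T = ∅ := Finset.card_eq_zero.mp (Nat.le_zero.mp hc)
    subst hT
    exact ⟨⊥, bot_le, fun v => by simp [deg2_bot]⟩
  | succ n ih =>
    intro T hc he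
    by_cases hT : T = ∅
    · subst hT
      exact ⟨⊥, bot_le, fun v => by simp [deg2_bot]⟩
    obtain ⟨u, hu⟩ := Finset.nonempty_iff_ne_empty.mpr hT
    have hpos : 0 < T.card := Finset.card_pos.mpr ⟨u, hu⟩
    have h2 : 2 ≤ T.card := by
      rcases he with ⟨k, hk⟩; omega
    have hne : (T.erase u).Nonempty := by
      rw [← Finset.card_pos, Finset.card_erase_of_mem hu]; omega
    obtain ⟨v, hv⟩ := hne
    have hvu : v ≠ u := Finset.ne_of_mem_erase hv
    have hvT : v ∈ T := Finset.mem_of_mem_erase hv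
    have huT' : u ∈ T.erase v := Finset.mem_erase.mpr ⟨hvu.symm, hu⟩
    have hcT' : ((T.erase v).erase u).card = T.card - 2 := by
      rw [Finset.card_erase_of_mem huT', Finset.card_erase_of_mem hvT]
      omega
    have heT' : Even ((T.erase v).erase u).card := by
      rcases he with ⟨k, hk⟩
      exact ⟨k - 1, by omega⟩
    obtain ⟨H', hH'le, hH'⟩ := ih ((T.erase v).erase u) (by omega) heT'
    obtain ⟨w⟩ := hG.preconnected u v
    let p := w.toPath
    refine ⟨H' ∆ p.1.toSubgraph.spanningCoe, ?_, ?_⟩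
    · exact le_trans symmDiff_le_sup (sup_le hH'le p.1.toSubgraph.spanningCoe_le)
    · intro x
      rw [deg2_symmDiff, hH' x, deg2_walk G p.1 p.2 x]
      by_cases h1 : x = u <;> by_cases h2 : x = v <;>
        simp [Finset.mem_erase, h1, h2, hvu, hu, hvT] <;>
        first | decide | (split_ifs <;> decide) | exact hvu.symm | skip

lemma connected_sdiff_of_not_bridge (G : SimpleGraph V) (hG : G.Connected) {a b : V}
    (hab : G.Adj a b) (hnb : ¬G.IsBridge s(a, b)) :
    (G \ fromEdgeSet {s(a, b)}).Connected := by
  rw [SimpleGraph.isBridge_iff] at hnb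
  push_neg at hnb
  have hr : (G \ fromEdgeSet {s(a, b)}).Reachable a b := hnb
  have hstep : ∀ {x y : V}, G.Adj x y → (G \ fromEdgeSet {s(a, b)}).Reachable x y := by
    intro x y hxy
    by_cases he : s(x, y) = s(a, b)
    · rw [Sym2.eq_iff] at he
      rcases he with ⟨rfl, rfl⟩ | ⟨rfl, rfl⟩
      · exact hr
      · exact hr.symm
    · exact SimpleGraph.Adj.reachable (by
        simp only [sdiff_adj, fromEdgeSet_adj, Set.mem_singleton_iff, not_and]
        exact ⟨hxy, fun h _ => he h⟩)
  have hpre : (G \ fromEdgeSet {s(a, b)}).Preconnected := by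
    intro x y
    obtain ⟨p⟩ := hG.preconnected x y
    induction p with
    | nil => exact SimpleGraph.Reachable.refl _
    | cons h q ih => exact (hstep h).trans ih
  exact { preconnected := hpre, nonempty := hG.nonempty }

lemma isAcyclic_anti {A B : SimpleGraph V} (h : A ≤ B) (hB : B.IsAcyclic) : A.IsAcyclic :=
  fun _ p hp => hB (p.mapLe h) (hp.mapLe h)

lemma zmod2_eq_one_iff_odd (n : ℕ) : (n : ZMod 2) = 1 ↔ Odd n := by
  constructor
  · intro h
    rcases Nat.even_or_odd n with he | ho
    · exfalso
      rw [(ZMod.natCast_eq_zero_iff n 2).mpr he.two_dvd] at h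
      exact one_ne_zero h.symm
    · exact ho
  · intro ho
    rcases ho with ⟨k, hk⟩
    subst hk
    push_cast
    have : (2 : ZMod 2) = 0 := by decide
    rw [this]; ring

lemma zmod2_eq_zero_iff_even (n : ℕ) : (n : ZMod 2) = 0 ↔ Even n := by
  rw [ZMod.natCast_eq_zero_iff]
  exact ⟨fun h => (even_iff_two_dvd).mpr h, fun h => h.two_dvd⟩

lemma main_aux : ∀ (n : ℕ) (G : SimpleGraph V), G.edgeSet.ncard ≤ n → G.Connected →
    ∀ T : Finset V, Even T.card →
      ∃ H, H ≤ G ∧ (∀ v, deg2 H v = if v ∈ T then 1 else 0) ∧ (G \ H).IsAcyclic := by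
  intro n
  induction n with
  | zero =>
    intro G hn hG T hT
    by_cases hac : G.IsAcyclic
    · obtain ⟨H, hle, hd⟩ := exists_join G hG T.card T le_rfl hT
      exact ⟨H, hle, hd, isAcyclic_anti sdiff_le hac⟩
    · exfalso
      rw [SimpleGraph.isAcyclic_iff_forall_adj_isBridge] at hac
      push_neg at hac
      obtain ⟨a, b, hab, -⟩ := hac
      have : 0 < G.edgeSet.ncard :=
        (Set.ncard_pos G.edgeSet.toFinite).mpr ⟨s(a, b), hab⟩
      omega
  | succ n ih =>
    intro G hn hG T hT
    by_cases hac : G.IsAcyclic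
    · obtain ⟨H, hle, hd⟩ := exists_join G hG T.card T le_rfl hT
      exact ⟨H, hle, hd, isAcyclic_anti sdiff_le hac⟩
    rw [SimpleGraph.isAcyclic_iff_forall_adj_isBridge] at hac
    push_neg at hac
    obtain ⟨a, b, hab, hnb⟩ := hac
    set E : SimpleGraph V := fromEdgeSet {s(a, b)} with hE
    have hG' : (G \ E).Connected := connected_sdiff_of_not_bridge G hG hab hnb
    have hEle : E ≤ G := by
      intro x y hxy
      rw [hE, fromEdgeSet_adj] at hxy
      obtain ⟨h1, -⟩ := hxy
      rw [Set.mem_singleton_iff, Sym2.eq_iff] at h1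
      rcases h1 with ⟨rfl, rfl⟩ | ⟨rfl, rfl⟩
      · exact hab
      · exact hab.symm
    have hsub : (G \ E).edgeSet ⊆ G.edgeSet \ {s(a, b)} := by
      intro e he
      rw [edgeSet_sdiff] at he
      refine ⟨he.1, fun hc => he.2 ?_⟩
      rw [Set.mem_singleton_iff] at hc
      subst hc
      rw [hE, edgeSet_fromEdgeSet]
      exact ⟨rfl, by simp [Sym2.isDiag_iff_proj_eq, hab.ne]⟩
    have hn' : (G \ E).edgeSet.ncard ≤ n := by
      have h1 : (G \ E).edgeSet.ncard ≤ (G.edgeSet \ {s(a, b)}).ncard :=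
        Set.ncard_le_ncard hsub (G.edgeSet \ {s(a, b)}).toFinite
      have h2 : (G.edgeSet \ {s(a, b)}).ncard < G.edgeSet.ncard :=
        Set.ncard_diff_singleton_lt_of_mem hab G.edgeSet.toFinite
      omega
    have hT' : Even (T ∆ {a, b} : Finset V).card := by
      rw [← zmod2_eq_zero_iff_even]
      rw [finset_card_symmDiff_zmod]
      rw [Finset.card_pair hab.ne]
      rw [← zmod2_eq_zero_iff_even] at hT
      rw [hT]
      decide
    obtain ⟨H', hH'le, hH'd, hH'ac⟩ := ih (G \ E) hn' hG' (T ∆ {a, b}) hT'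
    refine ⟨H' ∆ E, ?_, ?_, ?_⟩
    · exact le_trans symmDiff_le_sup (sup_le (hH'le.trans sdiff_le) hEle)
    · intro x
      rw [deg2_symmDiff, hH'd x, hE, deg2_single hab.ne]
      by_cases h1 : x = a <;> by_cases h2 : x = b <;> by_cases h3 : x ∈ T <;>
        simp_all [Finset.mem_symmDiff, hab.ne, hab.ne'] <;> try decide
    · have hGH : G \ (H' ∆ E) = (G \ E) \ H' := by
        ext x y
        have h1 : H'.Adj x y → (G \ E).Adj x y := fun h => hH'le h
        simp only [sdiff_adj, symmDiff_def, sup_adj] at *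
        tauto
      rw [hGH]
      exact hH'ac

theorem exists_Tjoin_coforest (G : SimpleGraph V) (hG : G.Connected)
    (T : Finset V) (hT : Even T.card) :
    ∃ H : SimpleGraph V, H ≤ G ∧ (∀ v ∈ T, Odd (H.neighborSet v).ncard) ∧
      (∀ v ∉ T, Even (H.neighborSet v).ncard) ∧ (G \ H).IsAcyclic := by
  obtain ⟨H, hle, hd, hac⟩ := main_aux G.edgeSet.ncard G le_rfl hG T hT
  refine ⟨H, hle, ?_, ?_, hac⟩
  · intro v hv
    have h := hd v
    rw [if_pos hv] at h
    exact (zmod2_eq_one_iff_odd _).mp h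
  · intro v hv
    have h := hd v
    rw [if_neg hv] at h
    exact (zmod2_eq_zero_iff_even _).mp h
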